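/- arXiv:math/0702779 — 2 statements merged into one kernel-verified Lean document; each statement's English description precedes it below -/
import Mathlib

section
/- Consider the vector autoregression X_t = Σ_{l=1}^{k-1} A_l X_{t-l} + μ D_t + ε_t (i.e. A_k = 0) with deterministic term satisfying D_t = D·D_{t-1} for an invertible matrix D. Let X_{t-1}^{bold} = (X_{t-1}', ..., X_{t-k+1}')'. Then, assuming all relevant Gram matrices are invertible, the quadratic form decomposition Q(X_{t-k} | X_{t-1}^{bold}, D_t) = Q(X_{t-2}^{bold} | D_t) - Q(X_{t-1}^{bold} | D_t) + Q(ε_{t-1} | X_{t-2}^{bold}, D_t) holds, where Q(Z) = (Σ ε_t Z_t')(Σ Z_t Z_t')^{-1}(Σ Z_t ε_t') and (Y|X) denotes least-squares residuals of Y on X. -/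
open Matrix Finset

/-- `Σ_{t∈Ts} Y_t Z_t'` for ℤ-indexed column-vector series. -/
noncomputable def SXY (Ts : Finset ℤ) {m n : Type*} [Fintype m] [Fintype n]
    (Y : ℤ → Matrix m (Fin 1) ℝ) (Z : ℤ → Matrix n (Fin 1) ℝ) : Matrix m n ℝ :=
  ∑ t ∈ Ts, Y t * (Z t)ᵀ

/-- Quadratic form `Q(Z) = (Σ ε Z')(Σ Z Z')⁻¹(Σ Z ε')`. -/
noncomputable def Qform (Ts : Finset ℤ) {p : ℕ} {n : Type*} [Fintype n] [DecidableEq n]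
    (ε : ℤ → Matrix (Fin p) (Fin 1) ℝ) (Z : ℤ → Matrix n (Fin 1) ℝ) :
    Matrix (Fin p) (Fin p) ℝ :=
  SXY Ts ε Z * (SXY Ts Z Z)⁻¹ * SXY Ts Z ε

/-- Least-squares residual series `(Y_t | Z_t)`. -/
noncomputable def resid (Ts : Finset ℤ) {m n : Type*} [Fintype m] [Fintype n] [DecidableEq n]
    (Y : ℤ → Matrix m (Fin 1) ℝ) (Z : ℤ → Matrix n (Fin 1) ℝ) : ℤ → Matrix m (Fin 1) ℝ :=
  fun t => Y t - SXY Ts Y Z * (SXY Ts Z Z)⁻¹ * Z t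

/-- The stacked lag vector `X_t^{bold} = (X_t', …, X_{t-k+2}')'` (k-1 lags). -/
noncomputable def Xbold {p : ℕ} (k : ℕ) (X : ℤ → Matrix (Fin p) (Fin 1) ℝ) (t : ℤ) :
    Matrix (Fin (k - 1) × Fin p) (Fin 1) ℝ :=
  fun li j => X (t - (li.1 : ℤ)) li.2 j

variable {Ts : Finset ℤ} {a b c : Type*} [Fintype a] [Fintype b] [Fintype c]

lemma SXY_transpose (Y : ℤ → Matrix a (Fin 1) ℝ) (Z : ℤ → Matrix b (Fin 1) ℝ) :
    (SXY Ts Y Z)ᵀ = SXY Ts Z Y := by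
  simp [SXY, transpose_sum, transpose_mul]

lemma SXY_mul_left (M : Matrix c a ℝ) (Y : ℤ → Matrix a (Fin 1) ℝ)
    (Z : ℤ → Matrix b (Fin 1) ℝ) :
    SXY Ts (fun t => M * Y t) Z = M * SXY Ts Y Z := by
  simp only [SXY, Matrix.mul_assoc]
  rw [Matrix.mul_sum]

lemma SXY_mul_right (M : Matrix c b ℝ) (Y : ℤ → Matrix a (Fin 1) ℝ)
    (Z : ℤ → Matrix b (Fin 1) ℝ) :
    SXY Ts Y (fun t => M * Z t) = SXY Ts Y Z * Mᵀ := by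
  simp only [SXY, transpose_mul, Matrix.mul_assoc]
  rw [Matrix.sum_mul]
  simp [Matrix.mul_assoc]

lemma SXY_sub_left (Y Y' : ℤ → Matrix a (Fin 1) ℝ) (Z : ℤ → Matrix b (Fin 1) ℝ) :
    SXY Ts (fun t => Y t - Y' t) Z = SXY Ts Y Z - SXY Ts Y' Z := by
  simp [SXY, Matrix.sub_mul, Finset.sum_sub_distrib]

lemma resid_sub_mul [DecidableEq b] (W : ℤ → Matrix b (Fin 1) ℝ)
    (hW : IsUnit (SXY Ts W W).det) (Y : ℤ → Matrix a (Fin 1) ℝ) (L : Matrix a b ℝ) :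
    resid Ts (fun t => Y t - L * W t) W = resid Ts Y W := by
  funext t
  simp only [resid, SXY_sub_left, SXY_mul_left]
  rw [Matrix.sub_mul, Matrix.sub_mul, Matrix.mul_assoc L, Matrix.mul_assoc L,
    Matrix.mul_nonsing_inv _ hW, Matrix.one_mul]
  abel

lemma Qform_mul_left {p : ℕ} [DecidableEq b] (ε : ℤ → Matrix (Fin p) (Fin 1) ℝ)
    (Z : ℤ → Matrix b (Fin 1) ℝ) (M : Matrix b b ℝ) (hM : IsUnit M.det) :
    Qform Ts ε (fun t => M * Z t) = Qform Ts ε Z := by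
  have hMT : IsUnit Mᵀ.det := by simpa [Matrix.det_transpose] using hM
  have h1 : Mᵀ * Mᵀ⁻¹ = 1 := Matrix.mul_nonsing_inv _ hMT
  have h2 : M⁻¹ * M = 1 := Matrix.nonsing_inv_mul _ hM
  simp only [Qform, SXY_mul_left, SXY_mul_right, Matrix.mul_inv_rev]
  simp only [Matrix.mul_assoc]
  rw [← Matrix.mul_assoc Mᵀ Mᵀ⁻¹, h1, Matrix.one_mul, ← Matrix.mul_assoc M⁻¹ M, h2,
    Matrix.one_mul]

lemma sum_fromBlocks' {α β γ δ : Type*} (s : Finset ℤ)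
    (A : ℤ → Matrix α β ℝ) (B : ℤ → Matrix α δ ℝ) (C : ℤ → Matrix γ β ℝ)
    (E : ℤ → Matrix γ δ ℝ) :
    ∑ t ∈ s, fromBlocks (A t) (B t) (C t) (E t)
      = fromBlocks (∑ t ∈ s, A t) (∑ t ∈ s, B t) (∑ t ∈ s, C t) (∑ t ∈ s, E t) := by
  ext (i | i) (j | j) <;> simp [Matrix.sum_apply, fromBlocks]

lemma sum_fromCols' {α β γ : Type*} (s : Finset ℤ)
    (A : ℤ → Matrix α β ℝ) (B : ℤ → Matrix α γ ℝ) :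
    ∑ t ∈ s, fromCols (A t) (B t) = fromCols (∑ t ∈ s, A t) (∑ t ∈ s, B t) := by
  ext i (j | j) <;> simp [Matrix.sum_apply, fromCols]

lemma SXY_fromRows_fromRows {a' b' : Type*} [Fintype a'] [Fintype b']
    (U : ℤ → Matrix a (Fin 1) ℝ) (V : ℤ → Matrix b (Fin 1) ℝ)
    (U' : ℤ → Matrix a' (Fin 1) ℝ) (V' : ℤ → Matrix b' (Fin 1) ℝ) :
    SXY Ts (fun t => fromRows (U t) (V t)) (fun t => fromRows (U' t) (V' t))
      = fromBlocks (SXY Ts U U') (SXY Ts U V') (SXY Ts V U') (SXY Ts V V') := by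
  unfold SXY
  rw [← sum_fromBlocks']
  refine Finset.sum_congr rfl fun t _ => ?_
  rw [transpose_fromRows, fromRows_mul_fromCols]

lemma SXY_left_fromRows (Y : ℤ → Matrix c (Fin 1) ℝ)
    (U : ℤ → Matrix a (Fin 1) ℝ) (V : ℤ → Matrix b (Fin 1) ℝ) :
    SXY Ts Y (fun t => fromRows (U t) (V t)) = fromCols (SXY Ts Y U) (SXY Ts Y V) := by
  unfold SXY
  rw [← sum_fromCols']
  refine Finset.sum_congr rfl fun t _ => ?_
  rw [transpose_fromRows, mul_fromCols]

lemma SXY_fromRows_right (Y : ℤ → Matrix c (Fin 1) ℝ)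
    (U : ℤ → Matrix a (Fin 1) ℝ) (V : ℤ → Matrix b (Fin 1) ℝ) :
    SXY Ts (fun t => fromRows (U t) (V t)) Y = fromRows (SXY Ts U Y) (SXY Ts V Y) := by
  rw [← SXY_transpose, SXY_left_fromRows, transpose_fromCols, SXY_transpose, SXY_transpose]

lemma inv_fromBlocks_diag {α β : Type*} [Fintype α] [DecidableEq α] [Fintype β] [DecidableEq β]
    (P : Matrix α α ℝ) (Q : Matrix β β ℝ) (hP : IsUnit P.det) (hQ : IsUnit Q.det) :
    (fromBlocks P 0 0 Q)⁻¹ = fromBlocks P⁻¹ 0 0 Q⁻¹ := by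
  apply Matrix.inv_eq_right_inv
  rw [fromBlocks_multiply]
  simp [Matrix.mul_nonsing_inv _ hP, Matrix.mul_nonsing_inv _ hQ, fromBlocks_one]

/-- Frisch–Waugh–Lovell style decomposition. -/
lemma Qform_fromRows {p : ℕ} [DecidableEq a] [DecidableEq b]
    (ε : ℤ → Matrix (Fin p) (Fin 1) ℝ)
    (U : ℤ → Matrix a (Fin 1) ℝ) (V : ℤ → Matrix b (Fin 1) ℝ)
    (hV : IsUnit (SXY Ts V V).det)
    (hU : IsUnit (SXY Ts (resid Ts U V) (resid Ts U V)).det) :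
    Qform Ts ε (fun t => fromRows (U t) (V t))
      = Qform Ts ε V + Qform Ts ε (resid Ts U V) := by
  set B : Matrix a b ℝ := SXY Ts U V * (SXY Ts V V)⁻¹ with hB
  have hres : ∀ t, resid Ts U V t = U t - B * V t := by
    intro t; rw [resid, hB]
  set Ut : ℤ → Matrix a (Fin 1) ℝ := resid Ts U V with hUt
  have hM : IsUnit (fromBlocks (1 : Matrix a a ℝ) (-B) 0 (1 : Matrix b b ℝ)).det := by
    rw [Matrix.det_fromBlocks_zero₂₁]
    simp
  have hkey : ∀ t, fromRows (Ut t) (V t)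
      = fromBlocks (1 : Matrix a a ℝ) (-B) 0 (1 : Matrix b b ℝ) * fromRows (U t) (V t) := by
    intro t
    rw [fromBlocks_mul_fromRows]
    simp [hres t, sub_eq_add_neg]
  have hQeq : Qform Ts ε (fun t => fromRows (U t) (V t))
      = Qform Ts ε (fun t => fromRows (Ut t) (V t)) := by
    conv_rhs => ext; rw [funext hkey]
    rw [Qform_mul_left _ _ _ hM]
  rw [hQeq]
  have hUV0 : SXY Ts Ut V = 0 := by
    have : Ut = fun t => U t - B * V t := funext hres
    rw [this, SXY_sub_left, SXY_mul_left, hB, Matrix.mul_assoc,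
      Matrix.nonsing_inv_mul _ hV, Matrix.mul_one, sub_self]
  have hVU0 : SXY Ts V Ut = 0 := by
    rw [← SXY_transpose, hUV0, transpose_zero]
  rw [Qform, SXY_fromRows_fromRows, SXY_left_fromRows, SXY_fromRows_right, hUV0, hVU0,
    inv_fromBlocks_diag _ _ hU hV, fromCols_mul_fromBlocks, fromCols_mul_fromRows]
  simp [Qform]
  abel

lemma Qform_submatrix {p : ℕ} {n n' : Type*} [Fintype n] [DecidableEq n] [Fintype n']
    [DecidableEq n'] (ε : ℤ → Matrix (Fin p) (Fin 1) ℝ) (Z : ℤ → Matrix n (Fin 1) ℝ)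
    (e : n' ≃ n) :
    Qform Ts ε (fun t => (Z t).submatrix e _root_.id) = Qform Ts ε Z := by
  have h1 : SXY Ts ε (fun t => (Z t).submatrix e _root_.id)
      = (SXY Ts ε Z).submatrix _root_.id e := by
    ext i j
    simp [SXY, Matrix.sum_apply, Matrix.mul_apply]
  have h2 : SXY Ts (fun t => (Z t).submatrix e _root_.id) (fun t => (Z t).submatrix e _root_.id)
      = (SXY Ts Z Z).submatrix e e := by
    ext i j
    simp [SXY, Matrix.sum_apply, Matrix.mul_apply]
  have h3 : SXY Ts (fun t => (Z t).submatrix e _root_.id) ε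
      = (SXY Ts Z ε).submatrix e _root_.id := by
    ext i j
    simp [SXY, Matrix.sum_apply, Matrix.mul_apply]
  rw [Qform, h1, h2, h3, Matrix.inv_submatrix_equiv,
    Matrix.submatrix_mul_equiv, Matrix.submatrix_mul_equiv, Matrix.submatrix_id_id, Qform]

/-- The permutation of regressor indices showing that `(X_{t-k}; X_{t-1}^bold; D_t)`
and `(X_{t-1}; X_{t-2}^bold; D_t)` carry the same components. -/
def permE (p k m : ℕ) (hk : 2 ≤ k) :
    (Fin p ⊕ ((Fin (k - 1) × Fin p) ⊕ Fin m)) ≃ (Fin p ⊕ ((Fin (k - 1) × Fin p) ⊕ Fin m)) where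
  toFun x :=
    match x with
    | .inl j => .inr (.inl (⟨0, by omega⟩, j))
    | .inr (.inl (i, j)) =>
        if h : (i : ℕ) + 1 < k - 1 then .inr (.inl (⟨(i : ℕ) + 1, h⟩, j)) else .inl j
    | .inr (.inr d) => .inr (.inr d)
  invFun x :=
    match x with
    | .inl j => .inr (.inl (⟨k - 2, by omega⟩, j))
    | .inr (.inl (i, j)) =>
        if _h : 0 < (i : ℕ) then
          .inr (.inl (⟨(i : ℕ) - 1, by have := i.isLt; omega⟩, j))
        else .inl j
    | .inr (.inr d) => .inr (.inr d)
  left_inv := by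
    rintro (j | ⟨⟨i, hi⟩, j⟩ | d)
    · simp
    · by_cases h : i + 1 < k - 1
      · simp only [dif_pos h]
        simp only [dif_pos (by omega : 0 < i + 1)]
        simp
      · simp only [dif_neg h]
        have : k - 2 = i := by omega
        simp [this]
    · rfl
  right_inv := by
    rintro (j | ⟨⟨i, hi⟩, j⟩ | d)
    · simp only []
      have h2 : ¬ (k - 2 + 1 < k - 1) := by omega
      simp [dif_neg h2]
    · by_cases h : 0 < i
      · simp only [dif_pos h]
        have : i - 1 + 1 < k - 1 := by omega
        simp only [dif_pos this, Sum.inr.injEq, Sum.inl.injEq, Prod.mk.injEq, Fin.mk.injEq]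
        exact ⟨by omega, trivial⟩
      · simp only [dif_neg h]
        have : i = 0 := by omega
        simp [this]
    · rfl

/-- Lemma 3.2 of Nielsen: algebraic decomposition of the quadratic form in a VAR with
`A_k = 0`, `Q(X_{t-k}|𝐗_{t-1},D_t) = Q(𝐗_{t-2}|D_t) - Q(𝐗_{t-1}|D_t) + Q(ε_{t-1}|𝐗_{t-2},D_t)`. -/
theorem qform_var_decomposition {p k m : ℕ} (T : ℕ) (hk : 2 ≤ k)
    (X ε : ℤ → Matrix (Fin p) (Fin 1) ℝ)
    (D : ℤ → Matrix (Fin m) (Fin 1) ℝ)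
    (Dmat : Matrix (Fin m) (Fin m) ℝ)
    (hDmat : IsUnit Dmat.det)
    (hDrec : ∀ t : ℤ, D t = Dmat * D (t - 1))
    (A : Fin (k - 1) → Matrix (Fin p) (Fin p) ℝ)
    (μ : Matrix (Fin p) (Fin m) ℝ)
    (hmodel : ∀ t : ℤ, X t = (∑ l : Fin (k - 1), A l * X (t - ((l : ℤ) + 1))) + μ * D t + ε t)
    (Ts : Finset ℤ) (hTs : Ts = Finset.Icc 1 (T : ℤ))
    -- regressor series
    (W1 : ℤ → Matrix ((Fin (k - 1) × Fin p) ⊕ Fin m) (Fin 1) ℝ)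
    (hW1 : ∀ t, W1 t = Matrix.fromRows (Xbold k X (t - 1)) (D t))
    (W2 : ℤ → Matrix ((Fin (k - 1) × Fin p) ⊕ Fin m) (Fin 1) ℝ)
    (hW2 : ∀ t, W2 t = Matrix.fromRows (Xbold k X (t - 2)) (D t))
    -- invertibility of all relevant Gram matrices
    (hG1 : IsUnit (SXY Ts W1 W1).det)
    (hG2 : IsUnit (SXY Ts W2 W2).det)
    (hGD : IsUnit (SXY Ts D D).det)
    (hGres : IsUnit (SXY Ts (resid Ts (fun t => X (t - (k : ℤ))) W1)
      (resid Ts (fun t => X (t - (k : ℤ))) W1)).det)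
    (hGb1 : IsUnit (SXY Ts (resid Ts (fun t => Xbold k X (t - 1)) D)
      (resid Ts (fun t => Xbold k X (t - 1)) D)).det)
    (hGb2 : IsUnit (SXY Ts (resid Ts (fun t => Xbold k X (t - 2)) D)
      (resid Ts (fun t => Xbold k X (t - 2)) D)).det)
    (hGe : IsUnit (SXY Ts (resid Ts (fun t => ε (t - 1)) W2)
      (resid Ts (fun t => ε (t - 1)) W2)).det) :
    Qform Ts ε (resid Ts (fun t => X (t - (k : ℤ))) W1)
      = Qform Ts ε (resid Ts (fun t => Xbold k X (t - 2)) D)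
        - Qform Ts ε (resid Ts (fun t => Xbold k X (t - 1)) D)
        + Qform Ts ε (resid Ts (fun t => ε (t - 1)) W2) := by
    -- Step A : FWL on (X_{t-k}; W1)
  have eA : Qform Ts ε (fun t => fromRows (X (t - (k : ℤ))) (W1 t))
      = Qform Ts ε W1 + Qform Ts ε (resid Ts (fun t => X (t - (k : ℤ))) W1) :=
    Qform_fromRows ε _ W1 hG1 hGres
  -- Step B : model substitution ε(t-1) = X(t-1) - L * W2 t
  set Abig : Matrix (Fin p) (Fin (k - 1) × Fin p) ℝ := fun i lj => A lj.1 i lj.2 with hAbig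
  set L : Matrix (Fin p) ((Fin (k - 1) × Fin p) ⊕ Fin m) ℝ :=
    fromCols Abig (μ * Dmat⁻¹) with hL
  have hDprev : ∀ t : ℤ, Dmat⁻¹ * D t = D (t - 1) := by
    intro t
    rw [hDrec t, ← Matrix.mul_assoc, Matrix.nonsing_inv_mul _ hDmat, Matrix.one_mul]
  have hAX : ∀ t : ℤ, Abig * Xbold k X (t - 2)
      = ∑ l : Fin (k - 1), A l * X (t - 2 - (l : ℤ)) := by
    intro t
    ext i c
    simp only [Matrix.mul_apply, Xbold, Matrix.sum_apply, Fintype.sum_prod_type, hAbig]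
    show (Abig * Xbold k X (t - 2)) i c = _
    rw [Matrix.mul_apply, Fintype.sum_prod_type]
    rfl
  have hLW : ∀ t : ℤ, L * W2 t
      = (∑ l : Fin (k - 1), A l * X (t - 1 - ((l : ℤ) + 1))) + μ * D (t - 1) := by
    intro t
    rw [hW2 t, hL, fromCols_mul_fromRows, hAX t, Matrix.mul_assoc, hDprev t]
    congr 1
    refine Finset.sum_congr rfl fun l _ => ?_
    have harg : t - 2 - ((l : Fin (k - 1)) : ℤ) = t - 1 - (((l : Fin (k - 1)) : ℤ) + 1) := by
      ring
    rw [harg]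
  have hεX : ∀ t : ℤ, ε (t - 1) = X (t - 1) - L * W2 t := by
    intro t
    rw [hLW t, hmodel (t - 1)]
    abel
  have hresεX : resid Ts (fun t => ε (t - 1)) W2 = resid Ts (fun t => X (t - 1)) W2 := by
    have h : (fun t => ε (t - 1)) = fun t => X (t - 1) - L * W2 t := funext fun t => hεX t
    rw [h, resid_sub_mul W2 hG2]
  -- Step C : FWL on (X_{t-1}; W2)
  have hGe' : IsUnit (SXY Ts (resid Ts (fun t => X (t - 1)) W2)
      (resid Ts (fun t => X (t - 1)) W2)).det := by
    rw [← hresεX]; exact hGe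
  have eC : Qform Ts ε (fun t => fromRows (X (t - 1)) (W2 t))
      = Qform Ts ε W2 + Qform Ts ε (resid Ts (fun t => X (t - 1)) W2) :=
    Qform_fromRows ε _ W2 hG2 hGe'
  -- Step D : permutation invariance
  have hZ : ∀ t : ℤ, fromRows (X (t - 1)) (W2 t)
      = (fromRows (X (t - (k : ℤ))) (W1 t)).submatrix (permE p k m hk) _root_.id := by
    intro t
    ext idx c
    rcases idx with j | lj | d
    · simp only [Matrix.submatrix_apply, _root_.id, permE, Equiv.coe_fn_mk,
        fromRows_apply_inl, fromRows_apply_inr, hW1 t, Xbold]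
      norm_num
    · obtain ⟨i, j⟩ := lj
      by_cases h : (i : ℕ) + 1 < k - 1
      · simp only [Matrix.submatrix_apply, _root_.id, permE, Equiv.coe_fn_mk, dif_pos h,
          fromRows_apply_inl, fromRows_apply_inr, hW1 t, hW2 t, Xbold]
        have harg : t - 2 - ((i : ℕ) : ℤ) = t - 1 - (((i : ℕ) + 1 : ℕ) : ℤ) := by
          push_cast; ring
        rw [harg]
      · have hi : (i : ℕ) = k - 2 := by have := i.isLt; omega
        simp only [Matrix.submatrix_apply, _root_.id, permE, Equiv.coe_fn_mk, dif_neg h,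
          fromRows_apply_inl, fromRows_apply_inr, hW2 t, Xbold]
        have harg : t - 2 - ((i : ℕ) : ℤ) = t - (k : ℤ) := by omega
        rw [harg]
    · simp only [Matrix.submatrix_apply, _root_.id, permE, Equiv.coe_fn_mk,
        fromRows_apply_inr, hW1 t, hW2 t]
  have ePerm : Qform Ts ε (fun t => fromRows (X (t - 1)) (W2 t))
      = Qform Ts ε (fun t => fromRows (X (t - (k : ℤ))) (W1 t)) := by
    simp only [hZ]
    exact Qform_submatrix ε _ (permE p k m hk)
  -- Step E : decompose Q(W1), Q(W2)
  have eW1 : Qform Ts ε W1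
      = Qform Ts ε D + Qform Ts ε (resid Ts (fun t => Xbold k X (t - 1)) D) := by
    have hfun : W1 = fun t => fromRows (Xbold k X (t - 1)) (D t) := funext hW1
    rw [hfun]
    exact Qform_fromRows ε _ D hGD hGb1
  have eW2 : Qform Ts ε W2
      = Qform Ts ε D + Qform Ts ε (resid Ts (fun t => Xbold k X (t - 2)) D) := by
    have hfun : W2 = fun t => fromRows (Xbold k X (t - 2)) (D t) := funext hW2
    rw [hfun]
    exact Qform_fromRows ε _ D hGD hGb2
  -- assemble
  have key : Qform Ts ε W1 + Qform Ts ε (resid Ts (fun t => X (t - (k : ℤ))) W1)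
      = Qform Ts ε W2 + Qform Ts ε (resid Ts (fun t => ε (t - 1)) W2) := by
    rw [← eA, ← ePerm, eC, hresεX]
  rw [eW1, eW2] at key
  have h2 : Qform Ts ε (resid Ts (fun t => X (t - (k : ℤ))) W1)
      = (Qform Ts ε D + Qform Ts ε (resid Ts (fun t => Xbold k X (t - 2)) D)
          + Qform Ts ε (resid Ts (fun t => ε (t - 1)) W2))
        - (Qform Ts ε D + Qform Ts ε (resid Ts (fun t => Xbold k X (t - 1)) D)) := by
    rw [← key]
    abel
  rw [h2]
  abel
end

section
/- Let Ω̂_j be p×p symmetric positive definite matrices with Ω̂_j → Ω almost surely (Ω positive definite), and suppose T(Ω̂_{j} - Ω̂_{j+1}) = o(g(T)) almost surely for a positive function g with f(T)/g(T) → ∞ and f(T)/T → 0. Then the penalized criterion difference Φ_{j+1} - Φ_j = log det(Ω̂_{j+1}) - log det(Ω̂_j) + f(T)/T is eventually positive almost surely. In particular, an information criterion with penalty f does not select lag j+1 over lag j in the limit. -/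
open Matrix Filter MeasureTheory

attribute [local instance] Matrix.frobeniusNormedAddCommGroup
attribute [local instance] Matrix.frobeniusNormedSpace

lemma entry_le_frobenius {p : ℕ} (A : Matrix (Fin p) (Fin p) ℝ) (i j : Fin p) :
    ‖A i j‖ ≤ ‖A‖ := by
  rw [← coe_nnnorm (A i j), ← coe_nnnorm A, NNReal.coe_le_coe,
    Matrix.frobenius_nnnorm_def]
  have hx : ‖A i j‖₊ ^ (2:ℝ) ≤ ∑ i', ∑ j', ‖A i' j'‖₊ ^ (2:ℝ) := by
    calc ‖A i j‖₊ ^ (2:ℝ) ≤ ∑ j', ‖A i j'‖₊ ^ (2:ℝ) :=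
          Finset.single_le_sum (f := fun j' => ‖A i j'‖₊ ^ (2:ℝ))
            (fun _ _ => zero_le) (Finset.mem_univ j)
      _ ≤ ∑ i', ∑ j', ‖A i' j'‖₊ ^ (2:ℝ) :=
          Finset.single_le_sum (f := fun i' => ∑ j', ‖A i' j'‖₊ ^ (2:ℝ))
            (fun _ _ => zero_le) (Finset.mem_univ i)
  calc ‖A i j‖₊ = (‖A i j‖₊ ^ (2:ℝ)) ^ (1/2:ℝ) := by
        rw [← NNReal.rpow_mul]; norm_num
    _ ≤ (∑ i', ∑ j', ‖A i' j'‖₊ ^ (2:ℝ)) ^ (1/2:ℝ) :=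
        NNReal.rpow_le_rpow hx (by norm_num)

lemma contDiff_det' {p : ℕ} :
    ContDiff ℝ 1 (Matrix.det : Matrix (Fin p) (Fin p) ℝ → ℝ) := by
  have h : (Matrix.det : Matrix (Fin p) (Fin p) ℝ → ℝ)
      = fun A => ∑ σ : Equiv.Perm (Fin p),
          ((Equiv.Perm.sign σ : ℤ) : ℝ) * ∏ i, A (σ i) i := by
    funext A; rw [Matrix.det_apply']
  rw [h]
  refine ContDiff.sum fun σ _ => contDiff_const.mul ?_
  refine contDiff_prod fun i _ => ?_
  have hb : IsBoundedLinearMap ℝ (fun A : Matrix (Fin p) (Fin p) ℝ => A (σ i) i) :=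
    ⟨⟨fun A B => rfl, fun c A => rfl⟩, 1, one_pos, fun A => by
      simpa using entry_le_frobenius A (σ i) i⟩
  exact hb.contDiff

/-- If `Ω̂_j(T), Ω̂_{j+1}(T)` are a.s. positive definite, converge a.s. to a positive
definite `Ω`, and `T(Ω̂_j - Ω̂_{j+1}) = o(g(T))` a.s. with `f/g → ∞` and `f(T)/T → 0`,
then the information-criterion difference
`Φ_{j+1} - Φ_j = log det Ω̂_{j+1} - log det Ω̂_j + f(T)/T` is eventually positive a.s. -/
theorem criterion_difference_eventually_positive {p : ℕ}
    {Ωs : Type*} [MeasureSpace Ωs] (μ : Measure Ωs) [IsProbabilityMeasure μ]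
    (Ωj Ωj1 : ℕ → Ωs → Matrix (Fin p) (Fin p) ℝ)
    (Ωlim : Matrix (Fin p) (Fin p) ℝ) (hΩlim : Ωlim.PosDef)
    (f g : ℕ → ℝ) (hg : ∀ T, 0 < g T)
    (hfg : Tendsto (fun T => f T / g T) atTop atTop)
    (hfT : Tendsto (fun T => f T / (T : ℝ)) atTop (nhds 0))
    (hpos : ∀ᵐ ω ∂μ, ∀ T, (Ωj T ω).PosDef ∧ (Ωj1 T ω).PosDef)
    (hconv : ∀ᵐ ω ∂μ, Tendsto (fun T => Ωj T ω) atTop (nhds Ωlim) ∧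
      Tendsto (fun T => Ωj1 T ω) atTop (nhds Ωlim))
    (hdiff : ∀ᵐ ω ∂μ,
      Tendsto (fun T : ℕ => (T : ℝ) * ‖Ωj T ω - Ωj1 T ω‖ / g T) atTop (nhds 0)) :
    ∀ᵐ ω ∂μ, ∀ᶠ T in atTop,
      0 < Real.log (Ωj1 T ω).det - Real.log (Ωj T ω).det + f T / (T : ℝ) := by
  -- log ∘ det is locally Lipschitz near Ωlim
  have hld : ContDiffAt ℝ 1 (fun A : Matrix (Fin p) (Fin p) ℝ => Real.log A.det) Ωlim :=
    (Real.contDiffAt_log.mpr (ne_of_gt hΩlim.det_pos)).comp Ωlim contDiff_det'.contDiffAt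
  obtain ⟨K, s, hs, hK⟩ := hld.exists_lipschitzOnWith
  filter_upwards [hconv, hdiff] with ω hc hd
  obtain ⟨h1, h2⟩ := hc
  have e1 : ∀ᶠ T in atTop, Ωj T ω ∈ s := h1.eventually_mem hs
  have e2 : ∀ᶠ T in atTop, Ωj1 T ω ∈ s := h2.eventually_mem hs
  have e3 : ∀ᶠ T : ℕ in atTop, (T : ℝ) * ‖Ωj T ω - Ωj1 T ω‖ / g T ≤ 1 :=
    hd.eventually (eventually_le_nhds one_pos)
  have e4 : ∀ᶠ T in atTop, (K : ℝ) < f T / g T := hfg.eventually_gt_atTop _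
  filter_upwards [e1, e2, e3, e4, eventually_ge_atTop (1:ℕ)] with T m1 m2 m3 m4 hT1
  have hTpos : (0 : ℝ) < T := by exact_mod_cast hT1
  have hgT := hg T
  -- ‖Ωj - Ωj1‖ ≤ g T / T
  have hΔ : ‖Ωj T ω - Ωj1 T ω‖ ≤ g T / T := by
    rw [le_div_iff₀ hTpos]
    have := (div_le_one hgT).mp m3
    linarith [this]
  -- Lipschitz bound
  have hlip : |Real.log (Ωj1 T ω).det - Real.log (Ωj T ω).det|
      ≤ (K : ℝ) * ‖Ωj1 T ω - Ωj T ω‖ := by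
    have := hK.dist_le_mul _ m2 _ m1
    simpa [Real.dist_eq, dist_eq_norm] using this
  have hnorm : ‖Ωj1 T ω - Ωj T ω‖ = ‖Ωj T ω - Ωj1 T ω‖ := norm_sub_rev _ _
  have hbound : Real.log (Ωj1 T ω).det - Real.log (Ωj T ω).det
      ≥ -((K : ℝ) * (g T / T)) := by
    have h1' : Real.log (Ωj1 T ω).det - Real.log (Ωj T ω).det
        ≥ -((K : ℝ) * ‖Ωj T ω - Ωj1 T ω‖) := by
      rw [← hnorm]
      have := abs_le.mp hlip
      linarith [this.1]
    have : (K : ℝ) * ‖Ωj T ω - Ωj1 T ω‖ ≤ (K : ℝ) * (g T / T) :=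
      mul_le_mul_of_nonneg_left hΔ K.coe_nonneg
    linarith
  -- f T / T > K * g T / T
  have hf : (K : ℝ) * g T < f T := by
    have := (lt_div_iff₀ hgT).mp m4
    linarith
  have hlt : (K : ℝ) * (g T / T) < f T / T := by
    rw [mul_div_assoc']
    exact div_lt_div_of_pos_right hf hTpos
  linarith
end
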